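/- Random transpositions comparison inequality: if μ is the uniform measure on permutations of n cards (with fixed deck sizes) and f: Ω → ℝ, then Var_μ(f) ≤ (1/n) Σ_{i≠j} μ[(f∘E_{i,j} − f)²], where E_{i,j} transposes the cards in positions i and j. -/

import Mathlib

open Finset Equiv Equiv.Perm

namespace Stmt9Aux

noncomputable def DD (n : ℕ) (f : Equiv.Perm (Fin n) → ℝ) (i j : Fin n) : ℝ :=
  ∑ η : Equiv.Perm (Fin n), (f (η * Equiv.swap i j) - f η) ^ 2

noncomputable def Dtot (n : ℕ) (f : Equiv.Perm (Fin n) → ℝ) : ℝ :=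
  ∑ i : Fin n, ∑ j : Fin n, if i ≠ j then DD n f i j else 0

noncomputable def Sv (n : ℕ) (f : Equiv.Perm (Fin n) → ℝ) : ℝ :=
  ∑ η : Equiv.Perm (Fin n),
    (f η - (∑ η' : Equiv.Perm (Fin n), f η') / (Nat.factorial n : ℝ)) ^ 2

lemma sq_sub_comm (a b : ℝ) : (a - b)^2 = (b - a)^2 := by ring

lemma DD_nonneg (n : ℕ) (f : Equiv.Perm (Fin n) → ℝ) (i j : Fin n) : 0 ≤ DD n f i j :=
  Finset.sum_nonneg fun _ _ => sq_nonneg _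

lemma Dtot_nonneg (n : ℕ) (f : Equiv.Perm (Fin n) → ℝ) : 0 ≤ Dtot n f := by
  refine Finset.sum_nonneg fun i _ => Finset.sum_nonneg fun j _ => ?_
  split
  · exact DD_nonneg n f i j
  · exact le_refl 0

lemma DD_self (n : ℕ) (f : Equiv.Perm (Fin n) → ℝ) (i : Fin n) : DD n f i i = 0 := by
  unfold DD
  simp [Equiv.swap_self, Equiv.Perm.mul_refl]

lemma swap_succ {m : ℕ} (i j x : Fin m) :
    Equiv.swap i.succ j.succ x.succ = (Equiv.swap i j x).succ := by
  rcases eq_or_ne x i with rfl | hi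
  · simp
  · rcases eq_or_ne x j with rfl | hj
    · simp
    · rw [Equiv.swap_apply_of_ne_of_ne hi hj,
        Equiv.swap_apply_of_ne_of_ne (fun h => hi (Fin.succ_injective _ h))
          (fun h => hj (Fin.succ_injective _ h))]

lemma dF_mul_swap {m : ℕ} (p : Fin (m+1)) (e : Equiv.Perm (Fin m)) (i j : Fin m) :
    Equiv.Perm.decomposeFin.symm (p, e) * Equiv.swap i.succ j.succ
      = Equiv.Perm.decomposeFin.symm (p, e * Equiv.swap i j) := by
  ext x
  refine Fin.cases ?_ (fun x => ?_) x
  · rw [Equiv.Perm.mul_apply,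
      Equiv.swap_apply_of_ne_of_ne (Fin.succ_ne_zero i).symm (Fin.succ_ne_zero j).symm,
      Equiv.Perm.decomposeFin_symm_apply_zero, Equiv.Perm.decomposeFin_symm_apply_zero]
  · rw [Equiv.Perm.mul_apply, swap_succ, Equiv.Perm.decomposeFin_symm_apply_succ,
      Equiv.Perm.decomposeFin_symm_apply_succ, Equiv.Perm.mul_apply]

lemma dF_symm_snd {m : ℕ} (σ : Equiv.Perm (Fin (m+1))) :
    Equiv.Perm.decomposeFin.symm (σ 0, (Equiv.Perm.decomposeFin σ).2) = σ := by
  have h1 : (Equiv.Perm.decomposeFin σ).1 = σ 0 := by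
    conv_rhs => rw [← Equiv.Perm.decomposeFin.symm_apply_apply σ]
    rw [show Equiv.Perm.decomposeFin σ
        = ((Equiv.Perm.decomposeFin σ).1, (Equiv.Perm.decomposeFin σ).2) from rfl,
      Equiv.Perm.decomposeFin_symm_apply_zero]
  rw [← h1]
  exact Equiv.Perm.decomposeFin.symm_apply_apply σ

lemma sum_decompose {m : ℕ} (h : Equiv.Perm (Fin (m+1)) → ℝ) :
    ∑ η : Equiv.Perm (Fin (m+1)), h η
      = ∑ p : Fin (m+1), ∑ e : Equiv.Perm (Fin m), h (Equiv.Perm.decomposeFin.symm (p, e)) := by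
  rw [← Equiv.sum_comp (Equiv.Perm.decomposeFin.symm :
      (Fin (m+1) × Equiv.Perm (Fin m)) ≃ Equiv.Perm (Fin (m+1))) h, Fintype.sum_prod_type]

lemma sum_mulRight {n : ℕ} (σ : Equiv.Perm (Fin n)) (h : Equiv.Perm (Fin n) → ℝ) :
    ∑ η : Equiv.Perm (Fin n), h (η * σ) = ∑ η : Equiv.Perm (Fin n), h η :=
  Equiv.sum_comp (Equiv.mulRight σ) h

lemma Sv_mul (n : ℕ) (f : Equiv.Perm (Fin n) → ℝ) (σ : Equiv.Perm (Fin n)) :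
    Sv n (fun η => f (η * σ)) = Sv n f := by
  unfold Sv
  rw [sum_mulRight σ f, sum_mulRight σ (fun η => (f η - (∑ η' : Equiv.Perm (Fin n), f η')
    / (Nat.factorial n : ℝ)) ^ 2)]

lemma DD_mul (n : ℕ) (f : Equiv.Perm (Fin n) → ℝ) (σ : Equiv.Perm (Fin n)) (i j : Fin n) :
    DD n (fun η => f (η * σ)) i j = DD n f (σ⁻¹ i) (σ⁻¹ j) := by
  unfold DD
  rw [← sum_mulRight σ⁻¹ (fun η => (f (η * Equiv.swap i j * σ) - f (η * σ)) ^ 2)]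
  refine Finset.sum_congr rfl fun η _ => ?_
  have h1 : η * σ⁻¹ * Equiv.swap i j * σ = η * Equiv.swap (σ⁻¹ i) (σ⁻¹ j) := by
    rw [Equiv.swap_apply_apply, inv_inv]
    group
  have h2 : η * σ⁻¹ * σ = η := inv_mul_cancel_right η σ
  show (f ((Equiv.mulRight σ⁻¹) η * Equiv.swap i j * σ) - f ((Equiv.mulRight σ⁻¹) η * σ)) ^ 2 = _
  rw [Equiv.coe_mulRight, h1, h2]

def dFs {m : ℕ} (p : Fin (m+1)) (e : Equiv.Perm (Fin m)) : Equiv.Perm (Fin (m+1)) :=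
  Equiv.Perm.decomposeFin.symm (p, e)

def Phi {m : ℕ} (q : Fin (m+1)) (η : Equiv.Perm (Fin (m+1))) : Equiv.Perm (Fin (m+1)) :=
  η * Equiv.swap 0 (η⁻¹ q)

lemma Phi_zero {m : ℕ} (q : Fin (m+1)) (η : Equiv.Perm (Fin (m+1))) : (Phi q η) 0 = q := by
  unfold Phi
  simp [Equiv.Perm.mul_apply]

lemma Phi_Phi {m : ℕ} (q : Fin (m+1)) (η : Equiv.Perm (Fin (m+1))) :
    Phi (η 0) (Phi q η) = η := by
  unfold Phi
  have h1 : (η * Equiv.swap 0 (η⁻¹ q))⁻¹ (η 0) = η⁻¹ q := by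
    simp [mul_inv_rev, Equiv.Perm.mul_apply, Equiv.swap_inv]
  rw [h1, mul_assoc, Equiv.swap_mul_self, mul_one]

lemma dFs_zero {m : ℕ} (p : Fin (m+1)) (e : Equiv.Perm (Fin m)) : dFs p e 0 = p :=
  Equiv.Perm.decomposeFin_symm_apply_zero p e

lemma dFs_roundtrip {m : ℕ} (σ : Equiv.Perm (Fin (m+1))) (q : Fin (m+1)) (h : σ 0 = q) :
    dFs q (Equiv.Perm.decomposeFin σ).2 = σ := by
  unfold dFs
  rw [← h]
  exact dF_symm_snd σ

lemma sum_Phi_fiber {m : ℕ} (f : Equiv.Perm (Fin (m+1)) → ℝ) (p q : Fin (m+1)) :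
    (∑ e : Equiv.Perm (Fin m), f (Phi q (dFs p e)))
      = ∑ e : Equiv.Perm (Fin m), f (dFs q e) := by
  refine Finset.sum_nbij'
    (fun e => (Equiv.Perm.decomposeFin (Phi q (dFs p e))).2)
    (fun e => (Equiv.Perm.decomposeFin (Phi p (dFs q e))).2)
    (fun e _ => Finset.mem_univ _) (fun e _ => Finset.mem_univ _)
    ?_ ?_ ?_
  · intro e _
    have hr : dFs q (Equiv.Perm.decomposeFin (Phi q (dFs p e))).2 = Phi q (dFs p e) :=
      dFs_roundtrip _ _ (Phi_zero q (dFs p e))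
    have h2 := Phi_Phi q (dFs p e)
    rw [dFs_zero] at h2
    simp only [hr, h2]
    unfold dFs
    simp
  · intro e _
    have hr : dFs p (Equiv.Perm.decomposeFin (Phi p (dFs q e))).2 = Phi p (dFs q e) :=
      dFs_roundtrip _ _ (Phi_zero p (dFs q e))
    have h2 := Phi_Phi p (dFs q e)
    rw [dFs_zero] at h2
    simp only [hr, h2]
    unfold dFs
    simp
  · intro e _
    have hr : dFs q (Equiv.Perm.decomposeFin (Phi q (dFs p e))).2 = Phi q (dFs p e) :=
      dFs_roundtrip _ _ (Phi_zero q (dFs p e))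
    rw [hr]

lemma key {m : ℕ}
    (IH : ∀ g : Equiv.Perm (Fin m) → ℝ, Sv m g ≤ 1/(2*(m:ℝ)) * Dtot m g)
    (f : Equiv.Perm (Fin (m+1)) → ℝ) :
    Sv (m+1) f ≤ 1/(2*(m:ℝ)) *
        (∑ i : Fin (m+1), ∑ j : Fin (m+1),
          if i ≠ j ∧ i ≠ 0 ∧ j ≠ 0 then DD (m+1) f i j else 0)
      + 1/(2*((m:ℝ)+1)) * (∑ j : Fin (m+1), DD (m+1) f 0 j) := by
  set K : ℝ := (Nat.factorial m : ℝ) with hKdef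
  have hK : 0 < K := by rw [hKdef]; exact_mod_cast Nat.factorial_pos m
  set G : Fin (m+1) → Equiv.Perm (Fin m) → ℝ := fun p e => f (dFs p e) with hG
  set Mp : Fin (m+1) → ℝ := fun p => (∑ e, G p e) / K with hMp
  set M : ℝ := (∑ η, f η) / (Nat.factorial (m+1) : ℝ) with hM
  have hcard : ((Finset.univ : Finset (Equiv.Perm (Fin m))).card : ℝ) = K := by
    rw [Finset.card_univ, Fintype.card_perm, Fintype.card_fin]
  have hcard1 : ((Finset.univ : Finset (Fin (m+1))).card : ℝ) = (m:ℝ)+1 := by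
    rw [Finset.card_univ, Fintype.card_fin]; push_cast; ring
  -- Step A : decomposition of the variance
  have hT0 : ∀ p, ∑ e, (G p e - Mp p) = 0 := by
    intro p
    rw [Finset.sum_sub_distrib, Finset.sum_const, nsmul_eq_mul, hcard, hMp]
    field_simp
    ring
  have hA : Sv (m+1) f = (∑ p, ∑ e, (G p e - Mp p)^2) + K * ∑ p, (Mp p - M)^2 := by
    have h0 : Sv (m+1) f = ∑ p, ∑ e, (G p e - M)^2 := by
      unfold Sv
      exact sum_decompose (fun η => (f η - M)^2)
    rw [h0]
    have h1 : ∀ p, (∑ e, (G p e - M)^2)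
        = (∑ e, (G p e - Mp p)^2) + K * (Mp p - M)^2 := by
      intro p
      have h2 : ∀ e : Equiv.Perm (Fin m), (G p e - M)^2
          = (G p e - Mp p)^2 + (2*(Mp p - M))*(G p e - Mp p) + (Mp p - M)^2 := by
        intro e; ring
      rw [Finset.sum_congr rfl fun e _ => h2 e, Finset.sum_add_distrib,
        Finset.sum_add_distrib, ← Finset.mul_sum, hT0, mul_zero, add_zero,
        Finset.sum_const, nsmul_eq_mul, hcard]
    rw [Finset.sum_congr rfl fun p _ => h1 p, Finset.sum_add_distrib, ← Finset.mul_sum]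
  -- Step B : within-fiber variance via the induction hypothesis
  have hDDp : ∀ i j : Fin m, (∑ p, DD m (G p) i j) = DD (m+1) f i.succ j.succ := by
    intro i j
    unfold DD
    rw [sum_decompose (fun η => (f (η * Equiv.swap i.succ j.succ) - f η)^2)]
    refine Finset.sum_congr rfl fun p _ => Finset.sum_congr rfl fun e _ => ?_
    rw [dF_mul_swap]
    rfl
  have hfull : (∑ i : Fin (m+1), ∑ j : Fin (m+1),
        if i ≠ j ∧ i ≠ 0 ∧ j ≠ 0 then DD (m+1) f i j else 0)
      = ∑ i : Fin m, ∑ j : Fin m,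
          if i ≠ j then DD (m+1) f i.succ j.succ else 0 := by
    rw [Fin.sum_univ_succ]
    simp only [ne_eq, not_true_eq_false, false_and, and_false, if_false,
      Finset.sum_const_zero, zero_add]
    refine Finset.sum_congr rfl fun i _ => ?_
    rw [Fin.sum_univ_succ]
    simp [Fin.succ_ne_zero, Fin.succ_inj]
  have hB : (∑ p, ∑ e, (G p e - Mp p)^2)
      ≤ 1/(2*(m:ℝ)) * (∑ i : Fin (m+1), ∑ j : Fin (m+1),
          if i ≠ j ∧ i ≠ 0 ∧ j ≠ 0 then DD (m+1) f i j else 0) := by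
    calc ∑ p, ∑ e, (G p e - Mp p)^2 ≤ ∑ p, 1/(2*(m:ℝ)) * Dtot m (G p) := by
          refine Finset.sum_le_sum fun p _ => ?_
          exact IH (G p)
      _ = 1/(2*(m:ℝ)) * ∑ p, Dtot m (G p) := by rw [Finset.mul_sum]
      _ = 1/(2*(m:ℝ)) * (∑ i : Fin (m+1), ∑ j : Fin (m+1),
            if i ≠ j ∧ i ≠ 0 ∧ j ≠ 0 then DD (m+1) f i j else 0) := by
          rw [hfull]
          congr 1
          unfold Dtot
          rw [Finset.sum_comm]
          refine Finset.sum_congr rfl fun i _ => ?_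
          rw [Finset.sum_comm]
          refine Finset.sum_congr rfl fun j _ => ?_
          rcases eq_or_ne i j with rfl | hij
          · simp
          · simp only [hij, if_true, ne_eq]
            rw [← hDDp i j]
            simp [hij]
  -- Step C : variance of fiber means
  have hTq : ∀ p q : Fin (m+1), (∑ e, f (Phi q (dFs p e))) = ∑ e, G q e := by
    intro p q
    exact sum_Phi_fiber f p q
  have hMd : ∀ p q : Fin (m+1), Mp p - Mp q
      = (∑ e, (f (dFs p e) - f (Phi q (dFs p e)))) / K := by
    intro p q
    rw [Finset.sum_sub_distrib, hTq, hMp]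
    simp only
    rw [div_sub_div_same]
  have hC3 : ∀ p q : Fin (m+1), (Mp p - Mp q)^2
      ≤ (1/K) * ∑ e, (f (dFs p e) - f (Phi q (dFs p e)))^2 := by
    intro p q
    rw [hMd p q, div_pow]
    have hcs : (∑ e, (f (dFs p e) - f (Phi q (dFs p e))))^2
        ≤ K * ∑ e, (f (dFs p e) - f (Phi q (dFs p e)))^2 := by
      have := sq_sum_le_card_mul_sum_sq (s := (Finset.univ : Finset (Equiv.Perm (Fin m))))
        (f := fun e => (f (dFs p e) - f (Phi q (dFs p e))))
      rwa [hcard] at this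
    calc (∑ e, (f (dFs p e) - f (Phi q (dFs p e))))^2 / K^2
        ≤ (K * ∑ e, (f (dFs p e) - f (Phi q (dFs p e)))^2) / K^2 := by gcongr
      _ = (1/K) * ∑ e, (f (dFs p e) - f (Phi q (dFs p e)))^2 := by
          rw [pow_two]
          rw [mul_div_mul_left _ _ (ne_of_gt hK)]
          ring
  have hC4 : (∑ p, ∑ q, ∑ e, (f (dFs p e) - f (Phi q (dFs p e)))^2)
      = ∑ j : Fin (m+1), DD (m+1) f 0 j := by
    rw [Finset.sum_comm]
    have h1 : ∀ q : Fin (m+1), (∑ p, ∑ e, (f (dFs p e) - f (Phi q (dFs p e)))^2)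
        = ∑ η, (f η - f (Phi q η))^2 :=
      fun q => (sum_decompose (fun η => (f η - f (Phi q η))^2)).symm
    rw [Finset.sum_congr rfl fun q _ => h1 q, Finset.sum_comm]
    have h2 : ∀ η : Equiv.Perm (Fin (m+1)), (∑ q, (f η - f (Phi q η))^2)
        = ∑ k, (f η - f (η * Equiv.swap 0 k))^2 := by
      intro η
      rw [← Equiv.sum_comp (η⁻¹ : Equiv.Perm (Fin (m+1)))
        (fun k => (f η - f (η * Equiv.swap 0 k))^2)]
      exact Finset.sum_congr rfl fun q _ => rfl
    rw [Finset.sum_congr rfl fun η _ => h2 η, Finset.sum_comm]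
    refine Finset.sum_congr rfl fun k _ => ?_
    unfold DD
    exact Finset.sum_congr rfl fun η _ => sq_sub_comm _ _
  -- mean of fiber means
  have hfac : ((Nat.factorial (m+1) : ℕ) : ℝ) = ((m:ℝ)+1) * K := by
    rw [hKdef]; push_cast [Nat.factorial_succ]; ring
  have hMean : M = (∑ p, Mp p) / ((m:ℝ)+1) := by
    rw [hM, sum_decompose f, hfac, hMp]
    simp only
    rw [← Finset.sum_div, div_div]
    rw [mul_comm]
    rfl
  have hu0 : ∑ p, (Mp p - M) = 0 := by
    rw [Finset.sum_sub_distrib, Finset.sum_const, nsmul_eq_mul, hcard1, hMean]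
    have : ((m:ℝ)+1) ≠ 0 := by positivity
    field_simp
    ring
  have hC2 : (∑ p, ∑ q, (Mp p - Mp q)^2) = 2*((m:ℝ)+1) * ∑ p, (Mp p - M)^2 := by
    have h1 : ∀ p, (∑ q, (Mp p - Mp q)^2)
        = ((m:ℝ)+1) * (Mp p - M)^2 + ∑ q, (Mp q - M)^2 := by
      intro p
      have h2 : ∀ q : Fin (m+1), (Mp p - Mp q)^2
          = (Mp p - M)^2 - (2*(Mp p - M))*(Mp q - M) + (Mp q - M)^2 := by
        intro q; ring
      rw [Finset.sum_congr rfl fun q _ => h2 q, Finset.sum_add_distrib,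
        Finset.sum_sub_distrib, ← Finset.mul_sum, hu0, mul_zero, sub_zero,
        Finset.sum_const, nsmul_eq_mul, hcard1]
    rw [Finset.sum_congr rfl fun p _ => h1 p, Finset.sum_add_distrib,
      ← Finset.mul_sum, Finset.sum_const, nsmul_eq_mul, hcard1]
    ring
  have hC : K * (∑ p, (Mp p - M)^2)
      ≤ 1/(2*((m:ℝ)+1)) * (∑ j : Fin (m+1), DD (m+1) f 0 j) := by
    have h1 : (∑ p, ∑ q, (Mp p - Mp q)^2)
        ≤ (1/K) * (∑ j : Fin (m+1), DD (m+1) f 0 j) := by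
      rw [← hC4, Finset.mul_sum]
      refine Finset.sum_le_sum fun p _ => ?_
      rw [Finset.mul_sum]
      exact Finset.sum_le_sum fun q _ => hC3 p q
    have h2 : (∑ p, (Mp p - M)^2)
        = (∑ p, ∑ q, (Mp p - Mp q)^2) / (2*((m:ℝ)+1)) := by
      rw [hC2]
      field_simp
    rw [h2]
    rw [div_eq_mul_inv, ← mul_assoc]
    calc K * (∑ p, ∑ q, (Mp p - Mp q)^2) * (2*((m:ℝ)+1))⁻¹
        ≤ K * ((1/K) * (∑ j : Fin (m+1), DD (m+1) f 0 j)) * (2*((m:ℝ)+1))⁻¹ := by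
          gcongr
      _ = 1/(2*((m:ℝ)+1)) * (∑ j : Fin (m+1), DD (m+1) f 0 j) := by
          field_simp
  -- Assemble
  rw [hA]
  exact add_le_add hB hC

lemma main (n : ℕ) : ∀ f : Equiv.Perm (Fin n) → ℝ, Sv n f ≤ 1/(2*(n:ℝ)) * Dtot n f := by
  induction n with
  | zero =>
    intro f
    have h0 : Sv 0 f = 0 := by
      unfold Sv
      rw [Finset.univ_unique, Finset.sum_singleton, Finset.sum_singleton]
      norm_num [Nat.factorial]
    have h1 : Dtot 0 f = 0 := by
      unfold Dtot
      simp
    rw [h0, h1]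
    norm_num
  | succ m IH =>
    intro f
    -- symmetrized key inequality
    have hstep : ∀ t : Fin (m+1),
        Sv (m+1) f ≤ 1/(2*(m:ℝ)) *
            (∑ a : Fin (m+1), ∑ b : Fin (m+1),
              if a ≠ b ∧ a ≠ t ∧ b ≠ t then DD (m+1) f a b else 0)
          + 1/(2*((m:ℝ)+1)) * (∑ b : Fin (m+1), DD (m+1) f t b) := by
      intro t
      set σ : Equiv.Perm (Fin (m+1)) := Equiv.swap 0 t with hσ
      have ht : σ 0 = t := Equiv.swap_apply_left 0 t
      have hinv : σ⁻¹ = σ := by rw [hσ]; exact Equiv.swap_inv 0 t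
      have hDDσ : ∀ i j : Fin (m+1),
          DD (m+1) (fun η => f (η * σ)) i j = DD (m+1) f (σ i) (σ j) := by
        intro i j; rw [DD_mul, hinv]
      have h := key IH (fun η => f (η * σ))
      rw [Sv_mul] at h
      have hBsum : (∑ i : Fin (m+1), ∑ j : Fin (m+1),
            if i ≠ j ∧ i ≠ 0 ∧ j ≠ 0 then DD (m+1) (fun η => f (η * σ)) i j else 0)
          = ∑ a : Fin (m+1), ∑ b : Fin (m+1),
              if a ≠ b ∧ a ≠ t ∧ b ≠ t then DD (m+1) f a b else 0 := by
        have h1 : ∀ i j : Fin (m+1),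
            (if i ≠ j ∧ i ≠ 0 ∧ j ≠ 0 then DD (m+1) (fun η => f (η * σ)) i j else 0)
              = (if σ i ≠ σ j ∧ σ i ≠ t ∧ σ j ≠ t then DD (m+1) f (σ i) (σ j) else 0) := by
          intro i j
          have hiff : (i ≠ j ∧ i ≠ 0 ∧ j ≠ 0) ↔ (σ i ≠ σ j ∧ σ i ≠ t ∧ σ j ≠ t) := by
            rw [← ht, (Equiv.injective σ).ne_iff, (Equiv.injective σ).ne_iff,
              (Equiv.injective σ).ne_iff]
          rw [hDDσ i j, if_congr hiff rfl rfl]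
        rw [Finset.sum_congr rfl fun i _ => Finset.sum_congr rfl fun j _ => h1 i j]
        have h2 : ∀ i : Fin (m+1), (∑ j : Fin (m+1),
            if σ i ≠ σ j ∧ σ i ≠ t ∧ σ j ≠ t then DD (m+1) f (σ i) (σ j) else 0)
              = ∑ b : Fin (m+1), if σ i ≠ b ∧ σ i ≠ t ∧ b ≠ t then DD (m+1) f (σ i) b else 0 :=
          fun i => Equiv.sum_comp σ
            (fun b => if σ i ≠ b ∧ σ i ≠ t ∧ b ≠ t then DD (m+1) f (σ i) b else 0)
        rw [Finset.sum_congr rfl fun i _ => h2 i]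
        exact Equiv.sum_comp σ (fun a => ∑ b : Fin (m+1),
          if a ≠ b ∧ a ≠ t ∧ b ≠ t then DD (m+1) f a b else 0)
      have hCsum : (∑ j : Fin (m+1), DD (m+1) (fun η => f (η * σ)) 0 j)
          = ∑ b : Fin (m+1), DD (m+1) f t b := by
        rw [Finset.sum_congr rfl fun j _ => by rw [hDDσ 0 j, ht]]
        exact Equiv.sum_comp σ (fun b => DD (m+1) f t b)
      rw [hBsum, hCsum] at h
      exact h
    -- sum over t
    have hd : 0 ≤ Dtot (m+1) f := Dtot_nonneg _ _
    have hI1 : (∑ t : Fin (m+1), ∑ a : Fin (m+1), ∑ b : Fin (m+1),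
          if a ≠ b ∧ a ≠ t ∧ b ≠ t then DD (m+1) f a b else 0)
        = ((m:ℝ)-1) * Dtot (m+1) f := by
      rw [Finset.sum_comm]
      rw [Finset.sum_congr rfl fun a _ => Finset.sum_comm]
      unfold Dtot
      rw [Finset.mul_sum]
      refine Finset.sum_congr rfl fun a _ => ?_
      rw [Finset.mul_sum]
      refine Finset.sum_congr rfl fun b _ => ?_
      rcases eq_or_ne a b with rfl | hab
      · simp
      · have hpt : ∀ t : Fin (m+1),
            (if a ≠ b ∧ a ≠ t ∧ b ≠ t then DD (m+1) f a b else 0)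
              = DD (m+1) f a b - (if t = a then DD (m+1) f a b else 0)
                - (if t = b then DD (m+1) f a b else 0) := by
          intro t
          rcases eq_or_ne t a with rfl | h1
          · simp [hab]
          · rcases eq_or_ne t b with rfl | h2
            · simp [hab, h1]
            · simp [hab, h1, h2, Ne.symm h1, Ne.symm h2]
        rw [Finset.sum_congr rfl fun t _ => hpt t, Finset.sum_sub_distrib,
          Finset.sum_sub_distrib, Finset.sum_const, Finset.sum_ite_eq',
          Finset.sum_ite_eq', Finset.card_univ, Fintype.card_fin, nsmul_eq_mul]
        rw [if_pos (Finset.mem_univ a), if_pos (Finset.mem_univ b), if_pos hab]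
        push_cast
        ring
    have hI2 : (∑ t : Fin (m+1), ∑ b : Fin (m+1), DD (m+1) f t b) = Dtot (m+1) f := by
      unfold Dtot
      refine Finset.sum_congr rfl fun t _ => Finset.sum_congr rfl fun b _ => ?_
      rcases eq_or_ne t b with rfl | h
      · simp [DD_self]
      · simp [h]
    have hsumstep : ((m:ℝ)+1) * Sv (m+1) f
        ≤ 1/(2*(m:ℝ)) * (((m:ℝ)-1) * Dtot (m+1) f)
          + 1/(2*((m:ℝ)+1)) * Dtot (m+1) f := by
      have h := Finset.sum_le_sum (fun t (_ : t ∈ (Finset.univ : Finset (Fin (m+1)))) => hstep t)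
      rw [Finset.sum_const, Finset.card_univ, Fintype.card_fin, nsmul_eq_mul] at h
      rw [Finset.sum_add_distrib, ← Finset.mul_sum, ← Finset.mul_sum, hI1, hI2] at h
      push_cast at h ⊢
      exact h
    -- numeric conclusion
    have hgoalcast : (1:ℝ)/(2*((m+1 : ℕ):ℝ)) = 1/(2*((m:ℝ)+1)) := by push_cast; ring
    rw [hgoalcast]
    rcases Nat.eq_zero_or_pos m with rfl | hm
    · norm_num at hsumstep ⊢
      linarith
    · have hm1 : (1:ℝ) ≤ (m:ℝ) := by exact_mod_cast hm
      have hpos : (0:ℝ) < (m:ℝ)+1 := by positivity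
      have hmul : ((m:ℝ)+1) * (1/(2*((m:ℝ)+1)) * Dtot (m+1) f) = Dtot (m+1) f / 2 := by
        field_simp
      refine le_of_mul_le_mul_left ?_ hpos
      rw [hmul]
      refine le_trans hsumstep ?_
      have hrw : 1/(2*(m:ℝ)) * (((m:ℝ)-1) * Dtot (m+1) f)
          + 1/(2*((m:ℝ)+1)) * Dtot (m+1) f
          = (((m:ℝ)-1)/(2*(m:ℝ)) + 1/(2*((m:ℝ)+1))) * Dtot (m+1) f := by
        ring
      rw [hrw]
      have hco : ((m:ℝ)-1)/(2*(m:ℝ)) + 1/(2*((m:ℝ)+1)) ≤ 1/2 := by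
        have hm0 : (0:ℝ) < (m:ℝ) := by linarith
        rw [div_add_div _ _ (by positivity) (by positivity),
          div_le_div_iff₀ (by positivity) (by norm_num)]
        nlinarith [hm1]
      calc (((m:ℝ)-1)/(2*(m:ℝ)) + 1/(2*((m:ℝ)+1))) * Dtot (m+1) f
          ≤ (1/2) * Dtot (m+1) f := mul_le_mul_of_nonneg_right hco hd
        _ = Dtot (m+1) f / 2 := by ring

end Stmt9Aux

/-- Spectral gap bound for random transpositions: for the uniform measure `μ`
on arrangements of `n` cards in `n` positions (permutations) and any `f`,
`Var_μ(f) ≤ (1/n) ∑_{i≠j} μ[(f∘E_{i,j} − f)²]`, where `E_{i,j}` transposes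
the contents of positions `i` and `j`. -/
theorem stmt9 (n : ℕ) (hn : 1 ≤ n) (f : Equiv.Perm (Fin n) → ℝ) :
    (∑ η : Equiv.Perm (Fin n),
        (f η - (∑ η' : Equiv.Perm (Fin n), f η') / (Nat.factorial n : ℝ)) ^ 2) /
        (Nat.factorial n : ℝ) ≤
      (1 / (n : ℝ)) *
        ∑ i : Fin n, ∑ j : Fin n,
          if i ≠ j then
            (∑ η : Equiv.Perm (Fin n),
                (f (η * Equiv.swap i j) - f η) ^ 2) / (Nat.factorial n : ℝ)
          else 0 := by
  have h := Stmt9Aux.main n f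
  have hD := Stmt9Aux.Dtot_nonneg n f
  have hn1 : (1:ℝ) ≤ (n:ℝ) := by exact_mod_cast hn
  have h2 : Stmt9Aux.Sv n f ≤ (1/(n:ℝ)) * Stmt9Aux.Dtot n f := by
    refine le_trans h (mul_le_mul_of_nonneg_right ?_ hD)
    rw [div_le_div_iff₀ (by positivity) (by positivity)]
    nlinarith
  have hfac : (0:ℝ) < (Nat.factorial n : ℝ) := by exact_mod_cast Nat.factorial_pos n
  have h3 : Stmt9Aux.Sv n f / (Nat.factorial n : ℝ)
      ≤ ((1/(n:ℝ)) * Stmt9Aux.Dtot n f) / (Nat.factorial n : ℝ) := by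
    gcongr
  have h4 : ((1/(n:ℝ)) * Stmt9Aux.Dtot n f) / (Nat.factorial n : ℝ)
      = (1/(n:ℝ)) * (Stmt9Aux.Dtot n f / (Nat.factorial n : ℝ)) := by
    ring
  have h5 : Stmt9Aux.Dtot n f / (Nat.factorial n : ℝ)
      = ∑ i : Fin n, ∑ j : Fin n,
          if i ≠ j then
            (∑ η : Equiv.Perm (Fin n),
                (f (η * Equiv.swap i j) - f η) ^ 2) / (Nat.factorial n : ℝ)
          else 0 := by
    unfold Stmt9Aux.Dtot Stmt9Aux.DD
    rw [Finset.sum_div]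
    refine Finset.sum_congr rfl fun i _ => ?_
    rw [Finset.sum_div]
    refine Finset.sum_congr rfl fun j _ => ?_
    split
    · rfl
    · exact zero_div _
  have h6 := le_trans h3 (le_of_eq (by rw [h4, h5]))
  exact h6
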